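/- Let π be a probability measure on ℝ, n ≥ 1, A : ℝ → ℝ measurable, and suppose all the integrals below are finite and positive. Define g(t) = (∫_{(-∞,s)} exp(μt − nA(μ)) dπ(μ)) / (∫_ℝ exp(μt − nA(μ)) dπ(μ)). If π gives positive mass to both (−∞, s) and [s, ∞), then g is strictly decreasing in t. -/

import Mathlib

open MeasureTheory Real

/-- With a prior `pr` on ℝ and the posterior-probability function
`g t = (∫_{(-∞,s)} exp(μt − nA(μ)) d pr) / (∫_ℝ exp(μt − nA(μ)) d pr)`,
if all integrals involved are finite and positive and the prior charges both `(-∞, s)`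
and `[s, ∞)`, then `g` is strictly decreasing. -/
theorem stmt_2 (pr : Measure ℝ) [IsProbabilityMeasure pr] (n : ℕ) (hn : 1 ≤ n)
    (A : ℝ → ℝ) (hA : Measurable A) (s : ℝ)
    (hInt : ∀ t : ℝ, Integrable (fun μ => exp (μ * t - n * A μ)) pr)
    (hpos : ∀ t : ℝ, 0 < ∫ μ in Set.Iio s, exp (μ * t - n * A μ) ∂pr)
    (hmass1 : 0 < pr (Set.Iio s)) (hmass2 : 0 < pr (Set.Ici s)) :
    StrictAnti (fun t : ℝ =>
      (∫ μ in Set.Iio s, exp (μ * t - n * A μ) ∂pr) /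
        (∫ μ, exp (μ * t - n * A μ) ∂pr)) := by
  intro t1 t2 hlt
  simp only
  set δ := t2 - t1 with hδdef
  have hδ : 0 < δ := sub_pos.mpr hlt
  set F : ℝ → ℝ := fun t => ∫ μ in Set.Iio s, exp (μ * t - n * A μ) ∂pr with hF
  set H : ℝ → ℝ := fun t => ∫ μ in Set.Ici s, exp (μ * t - n * A μ) ∂pr with hHdef
  have hIntIio : ∀ t, IntegrableOn (fun μ => exp (μ * t - n * A μ)) (Set.Iio s) pr :=
    fun t => (hInt t).integrableOn
  have hIntIci : ∀ t, IntegrableOn (fun μ => exp (μ * t - n * A μ)) (Set.Ici s) pr :=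
    fun t => (hInt t).integrableOn
  have hG : ∀ t, (∫ μ, exp (μ * t - n * A μ) ∂pr) = F t + H t := fun t =>
    (intervalIntegral.integral_Iio_add_Ici (hIntIio t) (hIntIci t)).symm
  -- positivity of H
  have hHpos : ∀ t, 0 < H t := by
    intro t
    rw [hHdef]
    rw [setIntegral_pos_iff_support_of_nonneg_ae]
    · have : Function.support (fun μ => exp (μ * t - n * A μ)) = Set.univ := by
        ext x; simp [Function.support, exp_ne_zero]
      rw [this, Set.univ_inter]; exact hmass2
    · exact Filter.Eventually.of_forall fun x => (exp_pos _).le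
    · exact hIntIci t
  -- key rewriting: exp (μ * t2 - n * A μ) = exp (μ * t1 - n * A μ) * exp (μ * δ)
  have hsplit : ∀ μ : ℝ, exp (μ * t2 - n * A μ) = exp (μ * t1 - n * A μ) * exp (μ * δ) := by
    intro μ; rw [← exp_add]; ring_nf; congr 1; rw [hδdef]; ring
  -- strict inequality for F: F t2 < exp (s * δ) * F t1
  have hFstrict : F t2 < exp (s * δ) * F t1 := by
    have hD : 0 < ∫ μ in Set.Iio s,
        (exp (s * δ) * exp (μ * t1 - n * A μ) - exp (μ * t2 - n * A μ)) ∂pr := by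
      rw [setIntegral_pos_iff_support_of_nonneg_ae]
      · have hsub : Set.Iio s ⊆ Function.support
            (fun μ => exp (s * δ) * exp (μ * t1 - n * A μ) - exp (μ * t2 - n * A μ)) := by
          intro μ hμ
          have : exp (μ * t2 - n * A μ) < exp (s * δ) * exp (μ * t1 - n * A μ) := by
            rw [hsplit μ, mul_comm (exp (s * δ))]
            exact mul_lt_mul_of_pos_left
              (exp_lt_exp.mpr (by nlinarith [Set.mem_Iio.mp hμ])) (exp_pos _)
          simp only [Function.mem_support]
          exact ne_of_gt (sub_pos.mpr this)
        calc 0 < pr (Set.Iio s) := hmass1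
          _ ≤ pr (Function.support _ ∩ Set.Iio s) := by
              rw [Set.inter_eq_right.mpr hsub]
      · rw [Filter.EventuallyLE, ae_restrict_iff' measurableSet_Iio]
        refine Filter.Eventually.of_forall fun μ hμ => ?_
        have : exp (μ * t2 - n * A μ) ≤ exp (s * δ) * exp (μ * t1 - n * A μ) := by
          rw [hsplit μ, mul_comm (exp (s * δ))]
          exact mul_le_mul_of_nonneg_left
            (exp_le_exp.mpr (by nlinarith [Set.mem_Iio.mp hμ])) (exp_pos _).le
        simpa using this
      · exact ((hIntIio t1).const_mul _).sub (hIntIio t2)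
    have := integral_sub ((hIntIio t1).const_mul (exp (s * δ))) (hIntIio t2)
    rw [this] at hD
    rw [integral_const_mul] at hD
    linarith
  -- H t2 ≥ exp (s * δ) * H t1
  have hHge : exp (s * δ) * H t1 ≤ H t2 := by
    rw [hHdef, ← integral_const_mul]
    refine setIntegral_mono_on ((hIntIci t1).const_mul _) (hIntIci t2)
      measurableSet_Ici fun μ hμ => ?_
    rw [hsplit μ, mul_comm (exp (s * δ))]
    exact mul_le_mul_of_nonneg_left
      (exp_le_exp.mpr (by nlinarith [Set.mem_Ici.mp hμ])) (exp_pos _).le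
  have hF1 : 0 < F t1 := hpos t1
  have hF2 : 0 < F t2 := hpos t2
  have hG1 : 0 < F t1 + H t1 := by positivity
  have hG2 : 0 < F t2 + H t2 := by positivity
  rw [hG t1, hG t2, div_lt_div_iff₀ hG2 hG1]
  have : F t2 * H t1 < F t1 * H t2 := by
    calc F t2 * H t1 < (exp (s * δ) * F t1) * H t1 :=
          mul_lt_mul_of_pos_right hFstrict (hHpos t1)
      _ = F t1 * (exp (s * δ) * H t1) := by ring
      _ ≤ F t1 * H t2 := mul_le_mul_of_nonneg_left hHge hF1.le
  nlinarith
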